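/- Let P be an abstract polytope that is not a pyramid, i.e. P is not order-isomorphic to Q * pt for any abstract polytope Q. Then for every k ≥ 1, Aut(P * pt^{*k}) is isomorphic as a group to Aut(P) × Sym(k). -/

import Mathlib

universe u v

/-- An abstract polytope of rank `n ≥ -1`: a partial order with a least element (the `⊥` of the
`OrderBot` instance) and a greatest element, in which every maximal chain has exactly `n + 2`
elements, every interval admitting a maximal chain of at least 4 elements is connected, and the
diamond condition holds. -/
structure IsAbstractPolytope (P : Type u) [PartialOrder P] [OrderBot P] (n : ℤ) : Prop where
  neg_one_le : -1 ≤ n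
  exists_top : ∃ t : P, IsTop t
  maxChain_card : ∀ s : Set P, IsMaxChain (· ≤ ·) s → s.ncard = (n + 2).toNat
  connected : ∀ x z : P, x ≤ z →
      (∃ c : Set (Set.Icc x z), IsMaxChain (· ≤ ·) c ∧ 4 ≤ c.ncard) →
      ∀ F G : Set.Icc x z, (F : P) ≠ x → (F : P) ≠ z → (G : P) ≠ x → (G : P) ≠ z →
        Relation.ReflTransGen
          (fun a b : Set.Icc x z =>
            ((a : P) ≠ x ∧ (a : P) ≠ z ∧ (b : P) ≠ x ∧ (b : P) ≠ z) ∧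
              ((a : P) ≤ (b : P) ∨ (b : P) ≤ (a : P))) F G
  diamond : ∀ x z : P, x < z →
      (∀ c : Set (Set.Icc x z), IsMaxChain (· ≤ ·) c → c.ncard = 4) →
      {y : P | x < y ∧ y < z}.ncard = 2

/-- `x` has rank `k` if every maximal chain of the interval `[⊥, x] = Set.Iic x`
has exactly `k + 2` elements. -/
def HasRank {P : Type u} [PartialOrder P] [OrderBot P] (x : P) (k : ℤ) : Prop :=
  ∀ c : Set (Set.Iic x), IsMaxChain (· ≤ ·) c → c.ncard = (k + 2).toNat

/-- The Cartesian product `P ×c Q` of two bounded posets: the subposet of `P × Q`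
consisting of `(⊥, ⊥)` together with all pairs with both entries different from `⊥`.
(The join `P * Q` is just `P × Q` with the componentwise order.) -/
abbrev CartProd (P : Type u) (Q : Type v) [PartialOrder P] [OrderBot P]
    [PartialOrder Q] [OrderBot Q] : Type (max u v) :=
  {x : P × Q // x = (⊥, ⊥) ∨ (x.1 ≠ ⊥ ∧ x.2 ≠ ⊥)}

instance CartProd.instOrderBot (P : Type u) (Q : Type v) [PartialOrder P] [OrderBot P]
    [PartialOrder Q] [OrderBot Q] : OrderBot (CartProd P Q) where
  bot := ⟨(⊥, ⊥), Or.inl rfl⟩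
  bot_le x := show ((⊥, ⊥) : P × Q) ≤ x.val from bot_le

/-- The iterated Cartesian product of a family of bounded posets: tuples which are either
everywhere `⊥` or nowhere `⊥`. -/
abbrev CartPi {ι : Type v} (Q : ι → Type u) [∀ i, PartialOrder (Q i)] [∀ i, OrderBot (Q i)] :
    Type (max u v) :=
  {f : (i : ι) → Q i // (∀ i, f i = ⊥) ∨ (∀ i, f i ≠ ⊥)}

instance CartPi.instOrderBot {ι : Type v} (Q : ι → Type u) [∀ i, PartialOrder (Q i)]
    [∀ i, OrderBot (Q i)] : OrderBot (CartPi Q) where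
  bot := ⟨fun _ => ⊥, Or.inl fun _ => rfl⟩
  bot_le f := show (fun _ => ⊥) ≤ f.val from bot_le

/-- The `k`-fold Cartesian product of a bounded poset with itself. -/
abbrev CartPow (P : Type u) [PartialOrder P] [OrderBot P] (k : ℕ) : Type u :=
  CartPi (fun _ : Fin k => P)

/-- A bundled poset with a least element. -/
structure BddPoset : Type (u + 1) where
  carrier : Type u
  [po : PartialOrder carrier]
  [ob : OrderBot carrier]

attribute [instance] BddPoset.po BddPoset.ob

instance : CoeSort BddPoset.{u} (Type u) := ⟨BddPoset.carrier⟩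

/-- Prime with respect to the join: not order-isomorphic to a join `A * B = A × B` of two
abstract polytopes of rank at least `0`. -/
def JoinPrime (X : Type u) [PartialOrder X] [OrderBot X] : Prop :=
  ¬ ∃ (A B : BddPoset.{u}) (a b : ℤ), 0 ≤ a ∧ 0 ≤ b ∧
      IsAbstractPolytope A.carrier a ∧ IsAbstractPolytope B.carrier b ∧
      Nonempty (X ≃o (A.carrier × B.carrier))

/-- Prime with respect to the Cartesian product: not order-isomorphic to a Cartesian product
of two abstract polytopes of rank at least `1`. -/
def CartPrime (X : Type u) [PartialOrder X] [OrderBot X] : Prop :=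
  ¬ ∃ (A B : BddPoset.{u}) (a b : ℤ), 1 ≤ a ∧ 1 ≤ b ∧
      IsAbstractPolytope A.carrier a ∧ IsAbstractPolytope B.carrier b ∧
      Nonempty (X ≃o CartProd A.carrier B.carrier)

/-- `R` is a factor of `X` with respect to the join. -/
def JoinFactor (R : BddPoset.{u}) (X : Type u) [PartialOrder X] [OrderBot X] : Prop :=
  ∃ S : BddPoset.{u}, (∃ s : ℤ, IsAbstractPolytope S.carrier s) ∧
    Nonempty (X ≃o (R.carrier × S.carrier))

/-- `R` is a factor of `X` with respect to the Cartesian product. -/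
def CartFactor (R : BddPoset.{u}) (X : Type u) [PartialOrder X] [OrderBot X] : Prop :=
  ∃ S : BddPoset.{u}, (∃ s : ℤ, IsAbstractPolytope S.carrier s) ∧
    Nonempty (X ≃o CartProd R.carrier S.carrier)

/-- Relatively prime with respect to the join: no join-prime abstract polytope of rank `≥ 0` is a
join-factor of both. -/
def JoinRelPrime (X : Type u) [PartialOrder X] [OrderBot X]
    (Y : Type u) [PartialOrder Y] [OrderBot Y] : Prop :=
  ¬ ∃ R : BddPoset.{u}, (∃ r : ℤ, 0 ≤ r ∧ IsAbstractPolytope R.carrier r) ∧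
      JoinPrime R.carrier ∧ JoinFactor R X ∧ JoinFactor R Y

/-- Relatively prime with respect to the Cartesian product. -/
def CartRelPrime (X : Type u) [PartialOrder X] [OrderBot X]
    (Y : Type u) [PartialOrder Y] [OrderBot Y] : Prop :=
  ¬ ∃ R : BddPoset.{u}, (∃ r : ℤ, 1 ≤ r ∧ IsAbstractPolytope R.carrier r) ∧
      CartPrime R.carrier ∧ CartFactor R X ∧ CartFactor R Y

/-- A pyramid: order-isomorphic to `Q * pt` for some abstract polytope `Q`, where
`pt = Bool` is the two-element chain. -/
def IsPyramid (X : Type u) [PartialOrder X] [OrderBot X] : Prop :=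
  ∃ Q : BddPoset.{u}, (∃ q : ℤ, IsAbstractPolytope Q.carrier q) ∧
    Nonempty (X ≃o (Q.carrier × Bool))

/-- A prism: order-isomorphic to `Q ×c I` for some abstract polytope `Q`, where
`I = Bool × Bool` is the four-element rank-one polytope. -/
def IsPrism (X : Type u) [PartialOrder X] [OrderBot X] : Prop :=
  ∃ Q : BddPoset.{u}, (∃ q : ℤ, IsAbstractPolytope Q.carrier q) ∧
    Nonempty (X ≃o CartProd Q.carrier (Bool × Bool))

/-- The homomorphism from `Equiv.Perm ι` to automorphisms of `ι → G` permuting the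
coordinates: `σ` sends `v` to `v ∘ σ⁻¹`. -/
def permHom (ι : Type v) (G : Type u) [Group G] : Equiv.Perm ι →* MulAut (ι → G) where
  toFun σ :=
    { toFun := fun v => v ∘ σ.symm
      invFun := fun v => v ∘ σ
      left_inv := fun v => by funext i; simp
      right_inv := fun v => by funext i; simp
      map_mul' := fun v w => rfl }
  map_one' := by apply MulEquiv.ext; intro v; funext i; rfl
  map_mul' σ τ := by apply MulEquiv.ext; intro v; funext i; rfl


section Helpers
variable {α : Type*} {β : Type*} [PartialOrder α] [PartialOrder β]

lemma isMaxChain_image (e : α ≃o β) {c : Set α} (hc : IsMaxChain (· ≤ ·) c) :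
    IsMaxChain (· ≤ ·) (⇑e '' c) := by
  constructor
  · exact IsChain.image_of_map_rel _ _ _ (fun a b h => e.le_iff_le.mpr h) hc.1
  · intro s hs hsub
    have h1 : IsChain (· ≤ ·) (⇑e.symm '' s) :=
      IsChain.image_of_map_rel _ _ _ (fun a b h => e.symm.le_iff_le.mpr h) hs
    have h2 : c ⊆ ⇑e.symm '' s := fun a ha =>
      ⟨e a, hsub ⟨a, ha, rfl⟩, e.symm_apply_apply a⟩
    have h3 := hc.2 h1 h2
    ext b; constructor
    · rintro ⟨a, ha, rfl⟩
      rw [h3] at ha; rcases ha with ⟨b', hb', rfl⟩; simpa using hb'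
    · intro hb; exact ⟨e.symm b, h3 ▸ ⟨b, hb, rfl⟩, e.apply_symm_apply b⟩

lemma map_isLUB (e : α ≃o β) {s : Set α} {x : α} (h : IsLUB s x) :
    IsLUB (⇑e '' s) (e x) := by
  rw [e.isLUB_image]; simpa using h

lemma map_isGLB (e : α ≃o β) {s : Set α} {x : α} (h : IsGLB s x) :
    IsGLB (⇑e '' s) (e x) := by
  rw [e.isGLB_image]; simpa using h

/-- Restriction of a global order iso to an interval. -/
def OrderIso.iccIso (e : α ≃o β) (x z : α) : Set.Icc x z ≃o Set.Icc (e x) (e z) where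
  toFun a := ⟨e a, e.le_iff_le.mpr a.2.1, e.le_iff_le.mpr a.2.2⟩
  invFun b := ⟨e.symm b, by
      constructor
      · exact e.le_iff_le.mp (by rw [e.apply_symm_apply]; exact b.2.1)
      · exact e.le_iff_le.mp (by rw [e.apply_symm_apply]; exact b.2.2)⟩
  left_inv a := by ext; simp
  right_inv b := by ext; simp
  map_rel_iff' := by intro a b; show e (a : α) ≤ e (b : α) ↔ (a : α) ≤ b; simp [Subtype.coe_le_coe]

end Helpers

section IntervalTransfer
variable {α β : Type*} [PartialOrder α] [PartialOrder β]
variable {x z : α} {x' z' : β} (e : Set.Icc x z ≃o Set.Icc x' z')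

include e in
lemma maxChain_card_transfer (m : ℕ)
    (h : ∀ c : Set (Set.Icc x z), IsMaxChain (· ≤ ·) c → c.ncard = m) :
    ∀ c : Set (Set.Icc x' z'), IsMaxChain (· ≤ ·) c → c.ncard = m := by
  intro c hc
  rw [← h (⇑e.symm '' c) (isMaxChain_image e.symm hc),
    Set.ncard_image_of_injective _ e.symm.injective]

variable (hx : ∀ F : Set.Icc x z, ((e F : β) = x') ↔ ((F : α) = x))
  (hz : ∀ F : Set.Icc x z, ((e F : β) = z') ↔ ((F : α) = z))

include hx hz in
lemma connected_transfer
    (hcon : (∃ c : Set (Set.Icc x' z'), IsMaxChain (· ≤ ·) c ∧ 4 ≤ c.ncard) →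
      ∀ F G : Set.Icc x' z', (F : β) ≠ x' → (F : β) ≠ z' → (G : β) ≠ x' → (G : β) ≠ z' →
        Relation.ReflTransGen
          (fun a b : Set.Icc x' z' =>
            ((a : β) ≠ x' ∧ (a : β) ≠ z' ∧ (b : β) ≠ x' ∧ (b : β) ≠ z') ∧
              ((a : β) ≤ (b : β) ∨ (b : β) ≤ (a : β))) F G) :
    (∃ c : Set (Set.Icc x z), IsMaxChain (· ≤ ·) c ∧ 4 ≤ c.ncard) →
      ∀ F G : Set.Icc x z, (F : α) ≠ x → (F : α) ≠ z → (G : α) ≠ x → (G : α) ≠ z →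
        Relation.ReflTransGen
          (fun a b : Set.Icc x z =>
            ((a : α) ≠ x ∧ (a : α) ≠ z ∧ (b : α) ≠ x ∧ (b : α) ≠ z) ∧
              ((a : α) ≤ (b : α) ∨ (b : α) ≤ (a : α))) F G := by
  rintro ⟨c, hc, hc4⟩ F G hF1 hF2 hG1 hG2
  have hx' : ∀ G : Set.Icc x' z', ((e.symm G : α) = x) ↔ ((G : β) = x') := fun G => by
    rw [← hx (e.symm G), e.apply_symm_apply]
  have hz' : ∀ G : Set.Icc x' z', ((e.symm G : α) = z) ↔ ((G : β) = z') := fun G => by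
    rw [← hz (e.symm G), e.apply_symm_apply]
  have key := hcon ⟨⇑e '' c, isMaxChain_image e hc, by
      rwa [Set.ncard_image_of_injective _ e.injective]⟩
    (e F) (e G) (fun h => hF1 ((hx F).mp h)) (fun h => hF2 ((hz F).mp h))
    (fun h => hG1 ((hx G).mp h)) (fun h => hG2 ((hz G).mp h))
  have lifted := Relation.ReflTransGen.lift (r := fun a b : Set.Icc x' z' =>
            ((a : β) ≠ x' ∧ (a : β) ≠ z' ∧ (b : β) ≠ x' ∧ (b : β) ≠ z') ∧
              ((a : β) ≤ (b : β) ∨ (b : β) ≤ (a : β)))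
    (p := fun a b : Set.Icc x z =>
            ((a : α) ≠ x ∧ (a : α) ≠ z ∧ (b : α) ≠ x ∧ (b : α) ≠ z) ∧
              ((a : α) ≤ (b : α) ∨ (b : α) ≤ (a : α)))
    (⇑e.symm)
    (by
      rintro a b ⟨⟨h1, h2, h3, h4⟩, h5⟩
      refine ⟨⟨fun h => h1 ((hx' a).mp h), fun h => h2 ((hz' a).mp h),
        fun h => h3 ((hx' b).mp h), fun h => h4 ((hz' b).mp h)⟩, ?_⟩
      rcases h5 with h5 | h5
      · exact Or.inl (Subtype.coe_le_coe.mpr (e.symm.le_iff_le.mpr h5))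
      · exact Or.inr (Subtype.coe_le_coe.mpr (e.symm.le_iff_le.mpr h5))) _ _ key
  simpa [Function.onFun] using lifted

include hx hz in
lemma strictBetween_ncard :
    {y : β | x' < y ∧ y < z'}.ncard = {y : α | x < y ∧ y < z}.ncard := by
  classical
  set f : α → β := fun y => if h : y ∈ Set.Icc x z then (e ⟨y, h⟩ : β) else x' with hf
  have himg : f '' {y : α | x < y ∧ y < z} = {y : β | x' < y ∧ y < z'} := by
    ext y'; constructor
    · rintro ⟨y, ⟨hy1, hy2⟩, rfl⟩
      have hmem : y ∈ Set.Icc x z := ⟨le_of_lt hy1, le_of_lt hy2⟩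
      simp only [hf, dif_pos hmem]
      refine ⟨lt_of_le_of_ne (e ⟨y, hmem⟩).2.1 ?_, lt_of_le_of_ne (e ⟨y, hmem⟩).2.2 ?_⟩
      · exact fun h => (ne_of_gt hy1) ((hx ⟨y, hmem⟩).mp h.symm)
      · exact fun h => (ne_of_lt hy2) ((hz ⟨y, hmem⟩).mp h)
    · rintro ⟨hy1, hy2⟩
      have hmem : y' ∈ Set.Icc x' z' := ⟨le_of_lt hy1, le_of_lt hy2⟩
      have hx' : ∀ G : Set.Icc x' z', ((e.symm G : α) = x) ↔ ((G : β) = x') := fun G => by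
        rw [← hx (e.symm G), e.apply_symm_apply]
      have hz' : ∀ G : Set.Icc x' z', ((e.symm G : α) = z) ↔ ((G : β) = z') := fun G => by
        rw [← hz (e.symm G), e.apply_symm_apply]
      refine ⟨(e.symm ⟨y', hmem⟩ : α), ⟨?_, ?_⟩, ?_⟩
      · exact lt_of_le_of_ne (e.symm ⟨y', hmem⟩).2.1
          (fun h => (ne_of_gt hy1) ((hx' ⟨y', hmem⟩).mp h.symm))
      · exact lt_of_le_of_ne (e.symm ⟨y', hmem⟩).2.2
          (fun h => (ne_of_lt hy2) ((hz' ⟨y', hmem⟩).mp h))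
      · have hmem2 : ((e.symm ⟨y', hmem⟩ : Set.Icc x z) : α) ∈ Set.Icc x z :=
          (e.symm ⟨y', hmem⟩).2
        simp only [hf, dif_pos hmem2]
        rw [show (⟨_, hmem2⟩ : Set.Icc x z) = e.symm ⟨y', hmem⟩ from Subtype.ext rfl]
        rw [e.apply_symm_apply]
  have hinj : Set.InjOn f {y : α | x < y ∧ y < z} := by
    rintro y₁ ⟨h1, h2⟩ y₂ ⟨h3, h4⟩ hfeq
    have m1 : y₁ ∈ Set.Icc x z := ⟨le_of_lt h1, le_of_lt h2⟩
    have m2 : y₂ ∈ Set.Icc x z := ⟨le_of_lt h3, le_of_lt h4⟩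
    simp only [hf, dif_pos m1, dif_pos m2] at hfeq
    have := e.injective (Subtype.ext hfeq)
    exact congrArg Subtype.val this
  rw [← himg, Set.ncard_image_of_injOn hinj]

end IntervalTransfer

section Transfer
variable {X : Type*} {Y : Type*} [PartialOrder X] [OrderBot X] [PartialOrder Y] [OrderBot Y]

lemma IsAbstractPolytope.transfer {n : ℤ} (e : X ≃o Y) (h : IsAbstractPolytope X n) :
    IsAbstractPolytope Y n := by
  constructor
  · exact h.neg_one_le
  · obtain ⟨t, ht⟩ := h.exists_top
    refine ⟨e t, fun y => ?_⟩
    rw [← e.apply_symm_apply y]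
    exact e.le_iff_le.mpr (ht _)
  · intro s hs
    rw [← Set.ncard_image_of_injective s e.symm.injective]
    exact h.maxChain_card _ (isMaxChain_image e.symm hs)
  · intro x' z' hxz'
    have hx : ∀ F : Set.Icc x' z', (((e.symm.iccIso x' z') F : X) = e.symm x') ↔ ((F : Y) = x') := fun F => by
      show e.symm (F : Y) = e.symm x' ↔ _
      exact e.symm.injective.eq_iff
    have hz : ∀ F : Set.Icc x' z', (((e.symm.iccIso x' z') F : X) = e.symm z') ↔ ((F : Y) = z') := fun F => by
      show e.symm (F : Y) = e.symm z' ↔ _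
      exact e.symm.injective.eq_iff
    exact connected_transfer (e.symm.iccIso x' z') hx hz
      (h.connected (e.symm x') (e.symm z') (e.symm.le_iff_le.mpr hxz'))
  · intro x' z' hlt hall
    have hx : ∀ F : Set.Icc x' z', (((e.symm.iccIso x' z') F : X) = e.symm x') ↔ ((F : Y) = x') := fun F => by
      show e.symm (F : Y) = e.symm x' ↔ _
      exact e.symm.injective.eq_iff
    have hz : ∀ F : Set.Icc x' z', (((e.symm.iccIso x' z') F : X) = e.symm z') ↔ ((F : Y) = z') := fun F => by
      show e.symm (F : Y) = e.symm z' ↔ _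
      exact e.symm.injective.eq_iff
    rw [← strictBetween_ncard (e.symm.iccIso x' z') hx hz]
    exact h.diamond (e.symm x') (e.symm z') (e.symm.strictMono hlt)
      (maxChain_card_transfer (e.symm.iccIso x' z') 4 hall)

end Transfer
section Peel
variable {Q : Type u} [PartialOrder Q] [OrderBot Q]

lemma bool_le_false {b : Bool} (h : b ≤ false) : b = false := by
  cases b
  · rfl
  · exact absurd h (by decide)

def iccFalseIso (x z : Q) : Set.Icc x z ≃o Set.Icc ((x, false) : Q × Bool) (z, false) where
  toFun q := ⟨(q, false), ⟨⟨q.2.1, le_refl _⟩, ⟨q.2.2, le_refl _⟩⟩⟩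
  invFun p := ⟨p.1.1, ⟨p.2.1.1, p.2.2.1⟩⟩
  left_inv q := rfl
  right_inv p := by
    apply Subtype.ext
    have h2 : p.1.2 = false := bool_le_false p.2.2.2
    exact Prod.ext rfl h2.symm
  map_rel_iff' := by
    intro a b
    show ((a : Q), false) ≤ ((b : Q), false) ↔ (a : Q) ≤ b
    simp [Subtype.coe_le_coe, Prod.mk_le_mk]

lemma IsAbstractPolytope.peel {n : ℤ} (h : IsAbstractPolytope (Q × Bool) n) :
    IsAbstractPolytope Q (n - 1) := by
  -- the top of Q
  obtain ⟨T, hT⟩ := h.exists_top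
  have htop : IsTop T.1 := fun q => (hT (q, T.2)).1
  -- n ≥ 0
  have hn0 : 0 ≤ n := by
    have hch : IsChain (· ≤ ·) ({((⊥ : Q), false), ((⊥ : Q), true)} : Set (Q × Bool)) := by
      intro a ha b hb hab
      rcases ha with rfl | ha <;> rcases hb with rfl | hb
      · exact absurd rfl hab
      · rw [Set.mem_singleton_iff] at hb; subst hb; exact Or.inl (by simp)
      · rw [Set.mem_singleton_iff] at ha; subst ha; exact Or.inr (by simp)
      · rw [Set.mem_singleton_iff] at ha hb; subst ha; subst hb; exact absurd rfl hab
    obtain ⟨M, hM, hMsub⟩ := hch.exists_maxChain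
    have hcard := h.maxChain_card M hM
    have hMfin : M.Finite := by
      by_contra hinf
      rw [Set.Infinite.ncard (fun hf => hinf hf)] at hcard
      have hneg := h.neg_one_le
      omega
    have h2 : ({((⊥ : Q), false), ((⊥ : Q), true)} : Set (Q × Bool)).ncard ≤ M.ncard :=
      Set.ncard_le_ncard hMsub hMfin
    rw [Set.ncard_pair (by simp)] at h2
    omega
  refine ⟨by omega, ⟨T.1, htop⟩, ?_, ?_, ?_⟩
  · -- max chain cardinality
    intro c hc
    -- T.1 ∈ c
    have hTc : T.1 ∈ c := by
      by_contra hTc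
      have : c = insert T.1 c := (hc.2 (hc.1.insert (fun b _ _ => Or.inr (htop b)))
        (Set.subset_insert _ _))
      rw [this] at hTc; exact hTc (Set.mem_insert _ _)
    -- the extended chain
    set c' : Set (Q × Bool) := insert (T.1, true) ((fun q => (q, false)) '' c) with hc'def
    have hchain' : IsChain (· ≤ ·) c' := by
      apply IsChain.insert
      · exact IsChain.image_of_map_rel _ _ _ (fun a b hab => Prod.mk_le_mk.mpr ⟨hab, le_refl _⟩) hc.1
      · rintro b ⟨q, hq, rfl⟩ _
        exact Or.inr (Prod.mk_le_mk.mpr ⟨htop q, by simp⟩)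
    have hmax' : IsMaxChain (· ≤ ·) c' := by
      refine ⟨hchain', fun s hs hsub => ?_⟩
      apply Set.Subset.antisymm hsub
      intro y hy
      by_cases hyc : y ∈ c'
      · exact hyc
      rcases Bool.eq_false_or_eq_true y.2 with hy2 | hy2
      · -- y.2 = true; show y = (T.1, true)
        have hle : ∀ r ∈ c, r ≤ y.1 := by
          intro r hr
          have hrc' : (r, false) ∈ c' := Set.mem_insert_of_mem _ ⟨r, hr, rfl⟩
          have hyr : y ≠ (r, false) := fun hh => by simp [hh] at hy2
          rcases hs hy (hsub hrc') hyr with h1 | h1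
          · exfalso
            have hbb := bool_le_false h1.2
            rw [hy2] at hbb
            exact Bool.noConfusion hbb
          · exact h1.1
        have hyT : y.1 = T.1 := le_antisymm (htop y.1) (hle T.1 hTc)
        have hyeq : y = (T.1, true) := Prod.ext hyT hy2
        exact absurd (hyeq ▸ Set.mem_insert _ _) hyc
      · -- y = (y.1, false), show y.1 ∈ c
        have hcomp : ∀ r ∈ c, y.1 ≤ r ∨ r ≤ y.1 := by
          intro r hr
          have hrc' : (r, false) ∈ c' := Set.mem_insert_of_mem _ ⟨r, hr, rfl⟩
          by_cases hyr : y = (r, false)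
          · exact Or.inl (le_of_eq (congrArg Prod.fst hyr))
          · rcases hs hy (hsub hrc') hyr with h1 | h1
            · exact Or.inl h1.1
            · exact Or.inr h1.1
        have : c = insert y.1 c := hc.2 (hc.1.insert (fun b hb _ => hcomp b hb))
          (Set.subset_insert _ _)
        have hy1c : y.1 ∈ c := by rw [this]; exact Set.mem_insert _ _
        have hyeq : y = (y.1, false) := Prod.ext rfl hy2
        exact absurd (Set.mem_insert_of_mem _ ((Set.mem_image _ _ _).mpr ⟨y.1, hy1c, hyeq.symm⟩)) hyc
    have hcard := h.maxChain_card c' hmax'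
    -- finiteness
    have hc'fin : c'.Finite := by
      by_contra hinf
      rw [Set.Infinite.ncard (fun hf => hinf hf)] at hcard
      omega
    have hcfin : c.Finite := by
      exact Set.Finite.of_finite_image (hc'fin.subset (Set.subset_insert _ _))
        (Set.injOn_of_injective (fun a b hab => congrArg Prod.fst hab))
    have hnotmem : (T.1, true) ∉ (fun q => (q, false)) '' c := by
      rintro ⟨q, _, hq⟩
      exact Bool.false_ne_true (congrArg Prod.snd hq)
    have hinj : Function.Injective (fun q : Q => (q, false)) := fun a b hab =>
      congrArg Prod.fst hab
    rw [hc'def, Set.ncard_insert_of_notMem hnotmem (hcfin.image _),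
      Set.ncard_image_of_injective _ hinj] at hcard
    omega
  · -- connectivity
    intro x z hxz
    have hx : ∀ F : Set.Icc x z, (((iccFalseIso x z) F : Q × Bool) = (x, false)) ↔ ((F : Q) = x) := by
      intro F
      constructor
      · intro hh; exact congrArg Prod.fst hh
      · intro hh; exact Prod.ext hh rfl
    have hz : ∀ F : Set.Icc x z, (((iccFalseIso x z) F : Q × Bool) = (z, false)) ↔ ((F : Q) = z) := by
      intro F
      constructor
      · intro hh; exact congrArg Prod.fst hh
      · intro hh; exact Prod.ext hh rfl
    exact connected_transfer (iccFalseIso x z) hx hz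
      (h.connected (x, false) (z, false) (Prod.mk_le_mk.mpr ⟨hxz, le_refl _⟩))
  · -- diamond
    intro x z hlt hall
    have hx : ∀ F : Set.Icc x z, (((iccFalseIso x z) F : Q × Bool) = (x, false)) ↔ ((F : Q) = x) := by
      intro F
      constructor
      · intro hh; exact congrArg Prod.fst hh
      · intro hh; exact Prod.ext hh rfl
    have hz : ∀ F : Set.Icc x z, (((iccFalseIso x z) F : Q × Bool) = (z, false)) ↔ ((F : Q) = z) := by
      intro F
      constructor
      · intro hh; exact congrArg Prod.fst hh
      · intro hh; exact Prod.ext hh rfl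
    rw [← strictBetween_ncard (iccFalseIso x z) hx hz]
    refine h.diamond (x, false) (z, false) ?_ (maxChain_card_transfer (iccFalseIso x z) 4 hall)
    exact Prod.mk_lt_mk_iff_left.mpr hlt

end Peel

section Apex
variable {X : Type u} {Y : Type v} [PartialOrder X] [OrderBot X] [PartialOrder Y] [OrderBot Y]

def IsApex (a : X) : Prop :=
  (∀ x, ¬ a ≤ x → ∃ y, IsLUB {x, a} y) ∧
  (∀ y, a ≤ y → ∃ x, ¬ a ≤ x ∧ IsLUB {x, a} y) ∧
  (∀ x x' y y', ¬ a ≤ x → ¬ a ≤ x' → IsLUB {x, a} y → IsLUB {x', a} y' → (y ≤ y' ↔ x ≤ x'))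

lemma isLUB_pair_left_le {a b : X} (h : b ≤ a) : IsLUB {b, a} a := by
  constructor
  · rintro t (rfl | rfl)
    · exact h
    · exact le_refl _
  · intro u hu
    exact hu (Set.mem_insert_of_mem _ rfl)

lemma IsApex.ne_bot {a : X} (h : IsApex a) : a ≠ ⊥ := by
  intro hbot
  obtain ⟨x, hx, -⟩ := h.2.1 a le_rfl
  exact hx (hbot ▸ bot_le)

lemma IsApex.eq_bot_of_lt {a b : X} (h : IsApex a) (hb : b < a) : b = ⊥ := by
  have hxb : ¬ a ≤ b := fun hh => absurd (le_antisymm hb.le hh) hb.ne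
  have hx0 : ¬ a ≤ (⊥ : X) := fun hh => h.ne_bot (le_bot_iff.mp hh)
  have key := h.2.2 b ⊥ a a hxb hx0 (isLUB_pair_left_le hb.le) (isLUB_pair_left_le bot_le)
  exact le_bot_iff.mp (key.mp le_rfl)

lemma IsApex.map (e : X ≃o Y) {a : X} (h : IsApex a) : IsApex (e a) := by
  refine ⟨?_, ?_, ?_⟩
  · intro x hax
    have h1 : ¬ a ≤ e.symm x := fun hh => hax (by
      rw [← e.apply_symm_apply x]; exact e.le_iff_le.mpr hh)
    obtain ⟨y, hy⟩ := h.1 _ h1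
    refine ⟨e y, ?_⟩
    have := map_isLUB e hy
    rwa [Set.image_pair, e.apply_symm_apply] at this
  · intro y hay
    have h1 : a ≤ e.symm y := by
      have : e a ≤ e (e.symm y) := by rwa [e.apply_symm_apply]
      exact e.le_iff_le.mp this
    obtain ⟨x, hx1, hx2⟩ := h.2.1 _ h1
    refine ⟨e x, fun hh => hx1 (e.le_iff_le.mp hh), ?_⟩
    have := map_isLUB e hx2
    rwa [Set.image_pair, e.apply_symm_apply] at this
  · intro x x' y y' h1 h2 l1 l2
    have h1' : ¬ a ≤ e.symm x := fun hh => h1 (by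
      rw [← e.apply_symm_apply x]; exact e.le_iff_le.mpr hh)
    have h2' : ¬ a ≤ e.symm x' := fun hh => h2 (by
      rw [← e.apply_symm_apply x']; exact e.le_iff_le.mpr hh)
    have l1' : IsLUB {e.symm x, a} (e.symm y) := by
      have := map_isLUB e.symm l1
      rwa [Set.image_pair, e.symm_apply_apply] at this
    have l2' : IsLUB {e.symm x', a} (e.symm y') := by
      have := map_isLUB e.symm l2
      rwa [Set.image_pair, e.symm_apply_apply] at this
    have key := h.2.2 _ _ _ _ h1' h2' l1' l2'
    exact Iff.trans (Iff.trans e.symm.le_iff_le.symm key) e.symm.le_iff_le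

/-- The bottom-preserving order-bot structure on the complement of the up-set of an apex. -/
def downOrderBot {q : X} (h : IsApex q) : OrderBot {x : X // ¬ q ≤ x} where
  bot := ⟨⊥, fun hh => h.ne_bot (le_bot_iff.mp hh)⟩
  bot_le x := bot_le

/-- An apex makes the poset a "pyramid" over the complement of its up-set. -/
noncomputable def apexPyramidIso {q : X} (h : IsApex q) :
    X ≃o ({x : X // ¬ q ≤ x} × Bool) := by
  classical
  -- choice of LUBs
  have hlub : ∀ x : {x : X // ¬ q ≤ x}, ∃ y, IsLUB {(x : X), q} y := fun x => h.1 x x.2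
  choose lub hlubspec using hlub
  have hsur : ∀ y : X, q ≤ y → ∃ x : {x : X // ¬ q ≤ x}, lub x = y := by
    intro y hy
    obtain ⟨x, hx1, hx2⟩ := h.2.1 y hy
    exact ⟨⟨x, hx1⟩, (hlubspec ⟨x, hx1⟩).unique hx2⟩
  have hmono : ∀ x x' : {x : X // ¬ q ≤ x}, (lub x ≤ lub x' ↔ (x : X) ≤ (x' : X)) :=
    fun x x' => h.2.2 _ _ _ _ x.2 x'.2 (hlubspec x) (hlubspec x')
  have hq_le_lub : ∀ x : {x : X // ¬ q ≤ x}, q ≤ lub x := fun x => (hlubspec x).1 (Set.mem_insert_of_mem _ rfl)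
  have hx_le_lub : ∀ x : {x : X // ¬ q ≤ x}, (x : X) ≤ lub x := fun x => (hlubspec x).1 (Set.mem_insert _ _)
  have lub_le_of_ub : ∀ (x : {x : X // ¬ q ≤ x}) (t : X), (x : X) ≤ t → q ≤ t → lub x ≤ t := by
    intro x t h1 h2
    refine (hlubspec x).2 ?_
    rintro s (rfl | rfl)
    · exact h1
    · exact h2
  refine OrderIso.symm ⟨⟨fun p => cond p.2 (lub p.1) (p.1 : X),
    fun y => if hy : q ≤ y then ((hsur y hy).choose, true) else (⟨y, hy⟩, false), ?_, ?_⟩, ?_⟩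
  · -- left inverse
    rintro ⟨x, b⟩
    cases b
    · have hx : ¬ q ≤ (x : X) := x.2
      simp only [cond_false, dif_neg hx]
    · have hq : q ≤ lub x := hq_le_lub x
      simp only [cond_true, dif_pos hq]
      have hspec : lub (hsur (lub x) hq).choose = lub x := (hsur (lub x) hq).choose_spec
      have : (hsur (lub x) hq).choose = x := Subtype.ext
        (le_antisymm ((hmono _ _).mp (le_of_eq hspec)) ((hmono _ _).mp (le_of_eq hspec.symm)))
      rw [this]
  · -- right inverse
    intro y
    by_cases hy : q ≤ y
    · simp only [dif_pos hy, cond_true]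
      exact (hsur y hy).choose_spec
    · simp only [dif_neg hy, cond_false]
  · -- order iso property
    rintro ⟨x, b⟩ ⟨x', b'⟩
    show cond b (lub x) (x : X) ≤ cond b' (lub x') (x' : X) ↔ _
    have hrhs : ((x, b) ≤ (x', b')) ↔ ((x : X) ≤ (x' : X) ∧ b ≤ b') := by
      rw [Prod.mk_le_mk, Subtype.coe_le_coe]
    rw [hrhs]
    cases b <;> cases b'
    · simp only [cond_false]
      exact ⟨fun hh => ⟨hh, le_refl _⟩, fun hh => hh.1⟩
    · simp only [cond_false, cond_true]
      constructor
      · intro hh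
        exact ⟨(hmono x x').mp (lub_le_of_ub x (lub x') hh (hq_le_lub x')), by decide⟩
      · intro hh
        exact le_trans hh.1 (hx_le_lub x')
    · simp only [cond_true, cond_false]
      constructor
      · intro hh
        exact absurd (le_trans (hq_le_lub x) hh) x'.2
      · intro hh
        exact absurd hh.2 (by decide)
    · simp only [cond_true]
      constructor
      · intro hh
        exact ⟨(hmono x x').mp hh, le_refl _⟩
      · intro hh
        exact (hmono x x').mpr hh.1

end Apex
section ProductAnalysis
variable {P : Type u} [PartialOrder P] [OrderBot P] {k : ℕ}

/-- The `i`-th atom of `Fin k → Bool`. -/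
def eB (k : ℕ) (i : Fin k) : Fin k → Bool := fun j => decide (j = i)

lemma eB_apply_self (i : Fin k) : eB k i i = true := by simp [eB]

lemma eB_ne_bot (i : Fin k) : eB k i ≠ ⊥ := by
  intro h
  have := congrFun h i
  rw [eB_apply_self] at this
  exact Bool.noConfusion this

lemma eB_inj {i j : Fin k} (h : eB k i = eB k j) : i = j := by
  have := congrFun h i
  rw [eB_apply_self] at this
  simpa [eB] using this.symm

lemma eB_le_iff {i : Fin k} {v : Fin k → Bool} : eB k i ≤ v ↔ v i = true := by
  constructor
  · intro h
    have := (Pi.le_def.mp h) i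
    rw [eB_apply_self] at this
    exact Bool.le_iff_imp.mp this rfl
  · intro h
    intro j
    by_cases hj : j = i
    · subst hj; simp [eB, h]
    · simp [eB, hj]

lemma le_eB_iff {i : Fin k} {v : Fin k → Bool} : v ≤ eB k i ↔ ∀ j, j ≠ i → v j = false := by
  constructor
  · intro h j hj
    have := (Pi.le_def.mp h) j
    rw [show eB k i j = false by simp [eB, hj]] at this
    exact bool_le_false this
  · intro h
    intro j
    by_cases hj : j = i
    · subst hj
      rw [eB_apply_self]
      exact Bool.le_true _
    · rw [h j hj]
      exact Bool.false_le _

/-- LUB of an element and an atom `(⊥, eB k i)` in the product. -/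
lemma isLUB_with_atom (p : P) (v : Fin k → Bool) (i : Fin k) :
    IsLUB {((p, v) : P × (Fin k → Bool)), (⊥, eB k i)}
      (p, fun j => v j || decide (j = i)) := by
  constructor
  · rintro t (rfl | rfl)
    · refine ⟨le_refl _, Pi.le_def.mpr fun j => ?_⟩
      dsimp only
      cases hvj : v j
      · exact Bool.false_le _
      · rw [Bool.true_or]
    · refine ⟨bot_le, Pi.le_def.mpr fun j => ?_⟩
      dsimp only
      by_cases hj : j = i
      · rw [show decide (j = i) = true by simp [hj], Bool.or_true]
        exact Bool.le_true _
      · rw [show eB k i j = false by simp [eB, hj]]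
        exact Bool.false_le _
  · rintro ⟨r, w⟩ hu
    have h1 := hu (Set.mem_insert _ _)
    have h2 := hu (Set.mem_insert_of_mem _ rfl)
    have hw : w i = true := eB_le_iff.mp h2.2
    refine ⟨h1.1, Pi.le_def.mpr fun j => ?_⟩
    dsimp only
    by_cases hj : j = i
    · rw [hj, hw]
      exact Bool.le_true _
    · rw [show decide (j = i) = false by simp [hj], Bool.or_false]
      exact (Pi.le_def.mp h1.2) j

lemma apex_atom (i : Fin k) : IsApex ((⊥, eB k i) : P × (Fin k → Bool)) := by
  refine ⟨?_, ?_, ?_⟩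
  · rintro ⟨p, v⟩ _
    exact ⟨_, isLUB_with_atom p v i⟩
  · rintro ⟨r, w⟩ hw
    have hwi : w i = true := eB_le_iff.mp hw.2
    refine ⟨(r, fun j => if j = i then false else w j), ?_, ?_⟩
    · intro hh
      have := eB_le_iff.mp hh.2
      simp at this
    · have hl := isLUB_with_atom r (fun j => if j = i then false else w j) i
      have heq : (fun j => (if j = i then false else w j) || decide (j = i)) = w := by
        funext j
        by_cases hj : j = i
        · rw [show decide (j = i) = true by simp [hj], Bool.or_true, hj, hwi]
        · rw [show decide (j = i) = false by simp [hj], Bool.or_false, if_neg hj]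
      rwa [heq] at hl
  · rintro ⟨p, v⟩ ⟨p', v'⟩ y y' h1 h2 l1 l2
    have hv : v i = false := by
      cases hvi : v i
      · rfl
      · exact absurd ⟨bot_le, eB_le_iff.mpr hvi⟩ h1
    have hv' : v' i = false := by
      cases hvi : v' i
      · rfl
      · exact absurd ⟨bot_le, eB_le_iff.mpr hvi⟩ h2
    have hy := l1.unique (isLUB_with_atom p v i)
    have hy' := l2.unique (isLUB_with_atom p' v' i)
    subst hy hy'
    constructor
    · rintro ⟨ha, hb⟩
      refine ⟨ha, Pi.le_def.mpr fun j => ?_⟩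
      dsimp only
      by_cases hj : j = i
      · rw [hj, hv]
        exact Bool.false_le _
      · have hbj := (Pi.le_def.mp hb) j
        dsimp only at hbj
        rwa [show decide (j = i) = false by simp [hj], Bool.or_false, Bool.or_false] at hbj
    · rintro ⟨ha, hb⟩
      refine ⟨ha, Pi.le_def.mpr fun j => ?_⟩
      dsimp only
      by_cases hj : j = i
      · rw [show decide (j = i) = true by simp [hj], Bool.or_true, Bool.or_true]
      · rw [show decide (j = i) = false by simp [hj], Bool.or_false, Bool.or_false]
        exact (Pi.le_def.mp hb) j

/-- LUB of pairs with `⊥` second coordinate transfers to `P`. -/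
lemma isLUB_pair_bot_iff {x q y : P} :
    IsLUB ({(x, (⊥ : Fin k → Bool)), (q, ⊥)} : Set (P × (Fin k → Bool))) (y, ⊥) ↔
      IsLUB {x, q} y := by
  constructor
  · intro h
    constructor
    · rintro t (rfl | rfl)
      · exact (h.1 (Set.mem_insert _ _)).1
      · exact (h.1 (Set.mem_insert_of_mem _ rfl)).1
    · intro r hr
      have : (r, (⊥ : Fin k → Bool)) ∈ upperBounds
          ({(x, (⊥ : Fin k → Bool)), (q, ⊥)} : Set (P × (Fin k → Bool))) := by
        rintro t (rfl | rfl)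
        · exact ⟨hr (Set.mem_insert _ _), le_refl _⟩
        · exact ⟨hr (Set.mem_insert_of_mem _ rfl), le_refl _⟩
      exact (h.2 this).1
  · intro h
    constructor
    · rintro t (rfl | rfl)
      · exact ⟨h.1 (Set.mem_insert _ _), le_refl _⟩
      · exact ⟨h.1 (Set.mem_insert_of_mem _ rfl), le_refl _⟩
    · rintro ⟨r, w⟩ hu
      refine ⟨h.2 ?_, bot_le⟩
      rintro t (rfl | rfl)
      · exact (hu (Set.mem_insert _ _)).1
      · exact (hu (Set.mem_insert_of_mem _ rfl)).1

lemma snd_eq_bot_of_isLUB {x q : P} {y : P × (Fin k → Bool)}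
    (h : IsLUB ({(x, (⊥ : Fin k → Bool)), (q, ⊥)} : Set (P × (Fin k → Bool))) y) :
    y.2 = ⊥ := by
  have hub : (y.1, (⊥ : Fin k → Bool)) ∈ upperBounds
      ({(x, (⊥ : Fin k → Bool)), (q, ⊥)} : Set (P × (Fin k → Bool))) := by
    rintro t (rfl | rfl)
    · exact ⟨(h.1 (Set.mem_insert _ _)).1, le_refl _⟩
    · exact ⟨(h.1 (Set.mem_insert_of_mem _ rfl)).1, le_refl _⟩
  exact le_bot_iff.mp (h.2 hub).2

/-- An apex of the product with `⊥` second coordinate gives an apex of `P`. -/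
lemma apex_fst {q : P} (h : IsApex ((q, (⊥ : Fin k → Bool)) : P × (Fin k → Bool))) :
    IsApex q := by
  refine ⟨?_, ?_, ?_⟩
  · intro x hx
    obtain ⟨y, hy⟩ := h.1 (x, ⊥) (fun hh => hx hh.1)
    have hy2 : y.2 = ⊥ := snd_eq_bot_of_isLUB hy
    have : y = (y.1, (⊥ : Fin k → Bool)) := Prod.ext rfl hy2
    rw [this] at hy
    exact ⟨y.1, isLUB_pair_bot_iff.mp hy⟩
  · intro y hy
    obtain ⟨x, hx1, hx2⟩ := h.2.1 (y, ⊥) ⟨hy, le_refl _⟩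
    have hx12 : x.2 = ⊥ := le_bot_iff.mp (hx2.1 (Set.mem_insert _ _)).2
    have hxx : x = (x.1, (⊥ : Fin k → Bool)) := Prod.ext rfl hx12
    rw [hxx] at hx2 hx1
    refine ⟨x.1, fun hh => hx1 ⟨hh, le_refl _⟩, isLUB_pair_bot_iff.mp hx2⟩
  · intro x x' y y' h1 h2 l1 l2
    have key := h.2.2 (x, ⊥) (x', ⊥) (y, ⊥) (y', ⊥) (fun hh => h1 hh.1) (fun hh => h2 hh.1)
      (isLUB_pair_bot_iff.mpr l1) (isLUB_pair_bot_iff.mpr l2)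
    constructor
    · intro hh
      exact (key.mp ⟨hh, le_refl _⟩).1
    · intro hh
      exact (key.mpr ⟨hh, le_refl _⟩).1

/-- Classification of apexes of the product. -/
lemma apex_cases {a : P × (Fin k → Bool)} (h : IsApex a) :
    (∃ i, a = (⊥, eB k i)) ∨ (a.2 = ⊥ ∧ IsApex a.1) := by
  by_cases h2 : a.2 = ⊥
  · refine Or.inr ⟨h2, ?_⟩
    have : a = (a.1, (⊥ : Fin k → Bool)) := Prod.ext rfl h2
    rw [this] at h
    exact apex_fst h
  · left
    have hvi : ∃ i, a.2 i = true := by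
      by_contra hh
      push_neg at hh
      exact h2 (funext fun i => by simpa using hh i)
    obtain ⟨i, hi⟩ := hvi
    by_cases h1 : a.1 = ⊥
    · refine ⟨i, ?_⟩
      by_cases hv : a.2 = eB k i
      · exact Prod.ext h1 hv
      · exfalso
        have hlt : ((⊥, eB k i) : P × (Fin k → Bool)) < a := by
          refine lt_of_le_of_ne ⟨bot_le, eB_le_iff.mpr hi⟩ ?_
          intro hh
          exact hv (congrArg Prod.snd hh).symm
        have := h.eq_bot_of_lt hlt
        exact eB_ne_bot i (congrArg Prod.snd this)
    · exfalso
      have hlt : ((a.1, ⊥) : P × (Fin k → Bool)) < a := by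
        refine lt_of_le_of_ne ⟨le_refl _, bot_le⟩ ?_
        intro hh
        exact h2 (congrArg Prod.snd hh).symm
      have := h.eq_bot_of_lt hlt
      exact h1 (congrArg Prod.fst this)

end ProductAnalysis
section MainAssembly
variable {P : Type u} [PartialOrder P] [OrderBot P] {k : ℕ}

lemma isGLB_pair_atom_bot_iff {x : P × (Fin k → Bool)} {i : Fin k} :
    IsGLB {x, ((⊥ : P), eB k i)} ⊥ ↔ x.2 i = false := by
  constructor
  · intro h
    cases hxi : x.2 i
    · rfl
    · exfalso
      have hlb : ((⊥ : P), eB k i) ∈ lowerBounds {x, ((⊥ : P), eB k i)} := by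
        rintro t (rfl | rfl)
        · exact ⟨bot_le, eB_le_iff.mpr hxi⟩
        · exact le_refl _
      have hle : eB k i ≤ (⊥ : Fin k → Bool) := (h.2 hlb).2
      have h2 := (Pi.le_def.mp hle) i
      rw [eB_apply_self] at h2
      exact Bool.noConfusion (bool_le_false h2)
  · intro hxi
    constructor
    · rintro t (rfl | rfl) <;> exact bot_le
    · rintro ⟨r, w⟩ hl
      have h1 : (r, w) ≤ x := hl (Set.mem_insert _ _)
      have h2 : (r, w) ≤ ((⊥ : P), eB k i) := hl (Set.mem_insert_of_mem _ rfl)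
      refine ⟨h2.1, Pi.le_def.mpr fun j => ?_⟩
      show w j ≤ (⊥ : Fin k → Bool) j
      by_cases hj : j = i
      · have h3 : w j ≤ x.2 j := (Pi.le_def.mp h1.2) j
        rw [hj, hxi] at h3
        rw [hj]
        exact h3
      · have h3 : w j ≤ eB k i j := (Pi.le_def.mp h2.2) j
        rw [show eB k i j = false by simp [eB, hj]] at h3
        exact h3

lemma isLUB_atomSet (v : Fin k → Bool) :
    IsLUB ((fun i => (((⊥ : P), eB k i) : P × (Fin k → Bool))) '' {i | v i = true}) (⊥, v) := by
  constructor
  · rintro t ⟨i, hi, rfl⟩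
    exact ⟨le_refl _, eB_le_iff.mpr hi⟩
  · rintro ⟨r, w⟩ hu
    refine ⟨bot_le, Pi.le_def.mpr fun j => ?_⟩
    show v j ≤ w j
    cases hvj : v j
    · exact Bool.false_le _
    · have hmem := Set.mem_image_of_mem (fun i => (((⊥ : P), eB k i) : P × (Fin k → Bool)))
        (show j ∈ {i | v i = true} from hvj)
      have h4 : eB k j ≤ w := (hu hmem).2
      rw [eB_le_iff.mp h4]

lemma isLUB_split (p : P) (v : Fin k → Bool) :
    IsLUB {((p, (⊥ : Fin k → Bool)) : P × (Fin k → Bool)), (⊥, v)} (p, v) := by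
  constructor
  · rintro t (rfl | rfl)
    · exact ⟨le_refl _, bot_le⟩
    · exact ⟨bot_le, le_refl _⟩
  · rintro ⟨r, w⟩ hu
    exact ⟨(hu (Set.mem_insert _ _)).1, (hu (Set.mem_insert_of_mem _ rfl)).2⟩

/-- The product automorphism built from an automorphism of `P` and a permutation. -/
def prodPermIso (g : P ≃o P) (σ : Equiv.Perm (Fin k)) :
    (P × (Fin k → Bool)) ≃o (P × (Fin k → Bool)) where
  toFun x := (g x.1, x.2 ∘ ⇑σ.symm)
  invFun x := (g.symm x.1, x.2 ∘ ⇑σ)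
  left_inv x := Prod.ext (g.symm_apply_apply x.1)
    (funext fun j => congrArg x.2 (σ.symm_apply_apply j))
  right_inv x := Prod.ext (g.apply_symm_apply x.1)
    (funext fun j => congrArg x.2 (σ.apply_symm_apply j))
  map_rel_iff' := by
    intro a b
    constructor
    · rintro ⟨h1, h2⟩
      refine ⟨g.le_iff_le.mp h1, Pi.le_def.mpr fun j => ?_⟩
      have := (Pi.le_def.mp h2) (σ j)
      simpa [Function.comp] using this
    · rintro ⟨h1, h2⟩
      exact ⟨g.le_iff_le.mpr h1, Pi.le_def.mpr fun j => (Pi.le_def.mp h2) (σ.symm j)⟩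

/-- The group homomorphism `Aut(P) × Sym(k) → Aut(P × 2^k)`. -/
def autProdHom (P : Type u) [PartialOrder P] [OrderBot P] (k : ℕ) :
    ((P ≃o P) × Equiv.Perm (Fin k)) →* ((P × (Fin k → Bool)) ≃o (P × (Fin k → Bool))) where
  toFun gs := prodPermIso gs.1 gs.2
  map_one' := RelIso.ext fun x => Prod.ext rfl (funext fun j => rfl)
  map_mul' a b := RelIso.ext fun x => Prod.ext rfl (funext fun j =>
    congrArg x.2 rfl)

lemma not_apex_of_not_pyramid {n : ℤ} (hP : IsAbstractPolytope P n) (hpyr : ¬ IsPyramid P)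
    (q : P) : ¬ IsApex q := by
  intro h
  apply hpyr
  letI := downOrderBot h
  exact ⟨@BddPoset.mk {x : P // ¬ q ≤ x} _ (downOrderBot h),
    ⟨n - 1, (hP.transfer (apexPyramidIso h)).peel⟩, ⟨apexPyramidIso h⟩⟩

end MainAssembly

/-- If the abstract polytope `P` is not a pyramid, then for every `k ≥ 1`,
`Aut(P * pt^{*k}) ≅ Aut(P) × Sym(k)`, where `pt^{*k} = Fin k → Bool` is the `k`-fold join of
the two-element chain `pt = Bool`. -/
theorem aut_join_simplex_of_not_pyramid (P : Type u) [PartialOrder P] [OrderBot P] (n : ℤ)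
    (hP : IsAbstractPolytope P n) (hpyr : ¬ IsPyramid P) (k : ℕ) (hk : 1 ≤ k) :
    Nonempty (((P × (Fin k → Bool)) ≃o (P × (Fin k → Bool))) ≃*
      ((P ≃o P) × Equiv.Perm (Fin k))) := by
  classical
  have hApexIff : ∀ a : P × (Fin k → Bool), IsApex a ↔ ∃ i, a = (⊥, eB k i) := by
    intro a
    constructor
    · intro h
      rcases apex_cases h with h1 | h1
      · exact h1
      · exact absurd h1.2 (not_apex_of_not_pyramid hP hpyr a.1)
    · rintro ⟨i, rfl⟩
      exact apex_atom i
  have main : ∀ f : (P × (Fin k → Bool)) ≃o (P × (Fin k → Bool)),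
      ∃ gs : (P ≃o P) × Equiv.Perm (Fin k), autProdHom P k gs = f := by
    intro f
    -- the permutation induced by f
    have hτ : ∀ i : Fin k, ∃ j, f (⊥, eB k i) = (⊥, eB k j) := fun i =>
      (hApexIff _).mp ((apex_atom i).map f)
    choose τ hτspec using hτ
    have hτinj : Function.Injective τ := fun i j hij => by
      have h1 : f (⊥, eB k i) = f (⊥, eB k j) := by rw [hτspec i, hτspec j, hij]
      exact eB_inj (congrArg Prod.snd (f.injective h1))
    let σ : Equiv.Perm (Fin k) := Equiv.ofBijective τ (Finite.injective_iff_bijective.mp hτinj)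
    have hσ : ∀ i, f (⊥, eB k i) = (⊥, eB k (σ i)) := hτspec
    -- the permutation induced by f.symm
    have hτ' : ∀ i : Fin k, ∃ j, f.symm (⊥, eB k i) = (⊥, eB k j) := fun i =>
      (hApexIff _).mp ((apex_atom i).map f.symm)
    choose τ' hτ'spec using hτ'
    have hτ'inj : Function.Injective τ' := fun i j hij => by
      have h1 : f.symm (⊥, eB k i) = f.symm (⊥, eB k j) := by rw [hτ'spec i, hτ'spec j, hij]
      exact eB_inj (congrArg Prod.snd (f.symm.injective h1))
    have hτ'sur : Function.Surjective τ' := (Finite.injective_iff_bijective.mp hτ'inj).2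
    -- the bottom fibre is preserved
    have hfb : ∀ p : P, (f (p, ⊥)).2 = ⊥ := by
      intro p
      funext j
      obtain ⟨i, rfl⟩ : ∃ i, σ i = j := ⟨σ.symm j, σ.apply_symm_apply j⟩
      have hglb : IsGLB {((p, ⊥) : P × (Fin k → Bool)), (⊥, eB k i)} ⊥ :=
        isGLB_pair_atom_bot_iff.mpr rfl
      have h2 := map_isGLB f hglb
      rw [Set.image_pair, f.map_bot, hσ i] at h2
      exact isGLB_pair_atom_bot_iff.mp h2
    have hfbs : ∀ p : P, (f.symm (p, ⊥)).2 = ⊥ := by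
      intro p
      funext j
      obtain ⟨i, rfl⟩ : ∃ i, τ' i = j := hτ'sur j
      have hglb : IsGLB {((p, ⊥) : P × (Fin k → Bool)), (⊥, eB k i)} ⊥ :=
        isGLB_pair_atom_bot_iff.mpr rfl
      have h2 := map_isGLB f.symm hglb
      rw [Set.image_pair, f.symm.map_bot, hτ'spec i] at h2
      exact isGLB_pair_atom_bot_iff.mp h2
    -- the automorphism of P induced by f
    let g : P ≃o P :=
      { toFun := fun p => (f (p, ⊥)).1
        invFun := fun p => (f.symm (p, ⊥)).1
        left_inv := fun p => by
          have h1 : f (p, ⊥) = ((f (p, ⊥)).1, ⊥) := Prod.ext rfl (hfb p)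
          have h2 : f.symm ((f (p, ⊥)).1, ⊥) = (p, ⊥) := by
            rw [← h1]; exact f.symm_apply_apply _
          exact congrArg Prod.fst h2
        right_inv := fun p => by
          have h1 : f.symm (p, ⊥) = ((f.symm (p, ⊥)).1, ⊥) := Prod.ext rfl (hfbs p)
          have h2 : f ((f.symm (p, ⊥)).1, ⊥) = (p, ⊥) := by
            rw [← h1]; exact f.apply_symm_apply _
          exact congrArg Prod.fst h2
        map_rel_iff' := by
          intro a b
          constructor
          · intro hh
            have e1 : f (a, ⊥) = ((f (a, ⊥)).1, ⊥) := Prod.ext rfl (hfb a)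
            have e2 : f (b, ⊥) = ((f (b, ⊥)).1, ⊥) := Prod.ext rfl (hfb b)
            have h1 : f (a, ⊥) ≤ f (b, ⊥) := by
              rw [e1, e2]; exact ⟨hh, le_refl _⟩
            exact (f.le_iff_le.mp h1).1
          · intro hh
            exact (f.le_iff_le.mpr (⟨hh, le_refl _⟩ :
              ((a, ⊥) : P × (Fin k → Bool)) ≤ (b, ⊥))).1 }
    have hg : ∀ p : P, f (p, ⊥) = (g p, ⊥) := fun p => Prod.ext rfl (hfb p)
    -- the action on the simplex part
    have hbotv : ∀ v : Fin k → Bool, f (⊥, v) = (⊥, v ∘ ⇑σ.symm) := by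
      intro v
      have h1 := map_isLUB f (isLUB_atomSet (P := P) v)
      have himg : ⇑f '' ((fun i => (((⊥ : P), eB k i) : P × (Fin k → Bool))) '' {i | v i = true})
          = (fun i => (((⊥ : P), eB k i) : P × (Fin k → Bool))) ''
              {i | (v ∘ ⇑σ.symm) i = true} := by
        rw [← Set.image_comp]
        ext t
        constructor
        · rintro ⟨i, hi, rfl⟩
          refine (Set.mem_image _ _ _).mpr ⟨σ i, ?_, ?_⟩
          · show v (σ.symm (σ i)) = true
            rwa [σ.symm_apply_apply]
          · show ((⊥ : P), eB k (σ i)) = f (⊥, eB k i)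
            exact (hσ i).symm
        · rintro ⟨j, hj, rfl⟩
          refine (Set.mem_image _ _ _).mpr ⟨σ.symm j, hj, ?_⟩
          show f (⊥, eB k (σ.symm j)) = (⊥, eB k j)
          rw [hσ (σ.symm j), σ.apply_symm_apply]
      rw [himg] at h1
      exact h1.unique (isLUB_atomSet (v ∘ ⇑σ.symm))
    have hmain : ∀ (p : P) (v : Fin k → Bool), f (p, v) = (g p, v ∘ ⇑σ.symm) := by
      intro p v
      have h1 := map_isLUB f (isLUB_split p v)
      rw [Set.image_pair, hg p, hbotv v] at h1
      exact h1.unique (isLUB_split (g p) (v ∘ ⇑σ.symm))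
    refine ⟨(g, σ), ?_⟩
    apply RelIso.ext
    rintro ⟨p, v⟩
    exact (hmain p v).symm
  have hinj : Function.Injective (autProdHom P k) := by
    intro a b hab
    have happ : ∀ x, prodPermIso a.1 a.2 x = prodPermIso b.1 b.2 x := fun x =>
      DFunLike.congr_fun hab x
    refine Prod.ext ?_ ?_
    · apply RelIso.ext
      intro p
      exact congrArg Prod.fst (happ ((p, ⊥) : P × (Fin k → Bool)))
    · apply Equiv.ext
      intro i
      have h2 := congrArg Prod.snd (happ (((⊥ : P), eB k i) : P × (Fin k → Bool)))
      have h3 : eB k i (a.2.symm (a.2 i)) = eB k i (b.2.symm (a.2 i)) := congrFun h2 (a.2 i)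
      rw [a.2.symm_apply_apply, eB_apply_self] at h3
      have h5 : b.2.symm (a.2 i) = i := by simpa [eB] using h3.symm
      calc a.2 i = b.2 (b.2.symm (a.2 i)) := (b.2.apply_symm_apply _).symm
        _ = b.2 i := by rw [h5]
  exact ⟨(MulEquiv.ofBijective (autProdHom P k) ⟨hinj, fun f => main f⟩).symm⟩
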